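/- Suppose X is a metric space and f : X → ℝⁿ is a continuous map. Then (1) y ∈ ℝⁿ is a stable value of f if and only if y is a stable value of f restricted to f⁻¹(W) for every neighborhood W of y; and (2) if in addition X is compact and the fiber f⁻¹(y) is totally disconnected, then y is a stable value of f if and only if f⁻¹(y) contains a stable point of f. -/

import Mathlib

open Metric Set MeasureTheory Filter Topology

noncomputable section

/-- Cross-ratio of a four-tuple of points in a metric space. -/
def crossRatio {Z : Type*} [MetricSpace Z] (z₁ z₂ z₃ z₄ : Z) : NNReal :=
  nndist z₁ z₃ * nndist z₂ z₄ / (nndist z₁ z₄ * nndist z₂ z₃)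

/-- `f : X → Y` is `η`-quasi-Möbius. -/
def IsQuasiMobius {X Y : Type*} [MetricSpace X] [MetricSpace Y]
    (η : NNReal ≃ₜ NNReal) (f : X → Y) : Prop :=
  Function.Injective f ∧
  ∀ x₁ x₂ x₃ x₄ : X, x₁ ≠ x₂ → x₁ ≠ x₃ → x₁ ≠ x₄ → x₂ ≠ x₃ → x₂ ≠ x₄ → x₃ ≠ x₄ →
    crossRatio (f x₁) (f x₂) (f x₃) (f x₄) ≤ η (crossRatio x₁ x₂ x₃ x₄)

/-- `f : X → Y` is `η`-quasi-symmetric. -/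
def IsQuasiSymmetric {X Y : Type*} [MetricSpace X] [MetricSpace Y]
    (η : NNReal ≃ₜ NNReal) (f : X → Y) : Prop :=
  Function.Injective f ∧
  ∀ x₁ x₂ x₃ : X, x₁ ≠ x₂ → x₁ ≠ x₃ → x₂ ≠ x₃ →
    nndist (f x₁) (f x₂) / nndist (f x₁) (f x₃) ≤ η (nndist x₁ x₂ / nndist x₁ x₃)

/-- Lebesgue covering dimension is at most `n`. -/
def covDimLE (X : Type*) [TopologicalSpace X] (n : ℕ) : Prop :=
  ∀ 𝒰 : Set (Set X), (∀ U ∈ 𝒰, IsOpen U) → ⋃₀ 𝒰 = univ →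
    ∃ 𝒱 : Set (Set X), (∀ V ∈ 𝒱, IsOpen V) ∧ ⋃₀ 𝒱 = univ ∧
      (∀ V ∈ 𝒱, ∃ U ∈ 𝒰, V ⊆ U) ∧
      ∀ x : X, {V ∈ 𝒱 | x ∈ V}.encard ≤ (n + 1 : ℕ)

/-- Lebesgue covering (topological) dimension. -/
noncomputable def topDim (X : Type*) [TopologicalSpace X] : ℕ∞ :=
  ⨅ (n : ℕ) (_ : covDimLE X n), (n : ℕ∞)

/-- Ahlfors `Q`-regularity. -/
def AhlforsRegular (Q : ℝ) (Z : Type*) [MetricSpace Z] [MeasurableSpace Z] [BorelSpace Z] :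
    Prop :=
  0 < Q ∧ CompleteSpace Z ∧ 0 < Metric.diam (univ : Set Z) ∧
  ∃ C : ℝ, 1 ≤ C ∧ ∀ (z : Z) (R : ℝ), 0 < R → R ≤ Metric.diam (univ : Set Z) →
    ENNReal.ofReal (R ^ Q / C) ≤ μH[Q] (Metric.ball z R) ∧
    μH[Q] (Metric.ball z R) ≤ ENNReal.ofReal (C * R ^ Q)

/-- The action of `G` on `Z` is by homeomorphisms, each `η`-quasi-Möbius. -/
def QMAction (η : NNReal ≃ₜ NNReal) (G Z : Type*) [Group G] [MulAction G Z]
    [MetricSpace Z] : Prop :=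
  (∀ g : G, Continuous fun z : Z => g • z) ∧
  ∀ g : G, IsQuasiMobius η (fun z : Z => g • z)

/-- Cocompactness of the induced action on distinct triples (for compact `Z`). -/
def TriplesCocompact (G Z : Type*) [Group G] [MulAction G Z] [MetricSpace Z] : Prop :=
  ∃ δ > (0:ℝ), ∀ z₁ z₂ z₃ : Z, z₁ ≠ z₂ → z₁ ≠ z₃ → z₂ ≠ z₃ →
    ∃ g : G, δ ≤ dist (g • z₁) (g • z₂) ∧ δ ≤ dist (g • z₁) (g • z₃) ∧
      δ ≤ dist (g • z₂) (g • z₃)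

def IsStableValue {X Y : Type*} [TopologicalSpace X] [MetricSpace Y]
    (f : X → Y) (y : Y) : Prop :=
  ∃ ε > (0:ℝ), ∀ g : X → Y, Continuous g → (∀ x, dist (f x) (g x) < ε) → y ∈ range g

def IsStableValueOn {X Y : Type*} [TopologicalSpace X] [MetricSpace Y]
    (f : X → Y) (s : Set X) (y : Y) : Prop :=
  IsStableValue (fun x : s => f x) y

def IsStablePoint {X Y : Type*} [TopologicalSpace X] [MetricSpace Y]
    (f : X → Y) (x : X) : Prop :=
  ∀ U ∈ nhds x, IsStableValueOn f U (f x)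

/-- `f` is a regular map. -/
def IsRegularMap {X Y : Type*} [MetricSpace X] [MetricSpace Y] (f : X → Y) : Prop :=
  (∃ L : NNReal, LipschitzWith L f) ∧
  ∃ N : ℕ, ∀ (y : Y) (r : ℝ), 0 < r → ∃ t : Finset X, t.card ≤ N ∧
    f ⁻¹' Metric.ball y r ⊆ ⋃ c ∈ t, Metric.ball c r

/-- A metric space is doubling. -/
def MetricDoubling (Y : Type*) [MetricSpace Y] : Prop :=
  ∃ M : ℕ, ∀ (y : Y) (R : ℝ), ∃ t : Finset Y, t.card ≤ M ∧
    Metric.ball y R ⊆ ⋃ c ∈ t, Metric.ball c (R / 2)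

/-- A metric space is uniformly perfect. -/
def UniformlyPerfect (Z : Type*) [MetricSpace Z] : Prop :=
  ∃ lam : ℝ, 1 ≤ lam ∧ ∀ (z : Z) (R : ℝ), 0 < R → R ≤ Metric.diam (univ : Set Z) →
    (Metric.closedBall z R \ Metric.ball z (R / lam)).Nonempty

/-- `(S, q)` is a weak tangent of `Z`: `S` is complete and some rescalings
`(λ_k Z, p_k)` converge to `(S, q)` in the pointed Gromov–Hausdorff sense. -/
def PointedWeakTangent (Z : Type*) [MetricSpace Z] (S : Type*) [MetricSpace S]
    (q : S) : Prop :=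
  CompleteSpace S ∧
  ∃ (lam : ℕ → ℝ) (p : ℕ → Z), (∀ k, 0 < lam k) ∧ Tendsto lam atTop atTop ∧
    ∀ R > (0:ℝ), ∀ ε > (0:ℝ), ∃ (N : ℕ) (M : Set S),
      q ∈ M ∧ M ⊆ Metric.ball q R ∧ (∀ s ∈ Metric.ball q R, ∃ m ∈ M, dist s m ≤ ε) ∧
      ∀ k ≥ N, ∃ (Mk : Set Z) (F : Z → S),
        p k ∈ Mk ∧ (∀ z ∈ Mk, lam k * dist z (p k) < R) ∧
        (∀ z : Z, lam k * dist z (p k) < R → ∃ w ∈ Mk, lam k * dist z w ≤ ε) ∧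
        F (p k) = q ∧ Set.BijOn F Mk M ∧
        ∀ a ∈ Mk, ∀ b ∈ Mk, |lam k * dist a b - dist (F a) (F b)| < ε

open scoped Classical

lemma stableOn_mono {X Y : Type*} [TopologicalSpace X] [MetricSpace Y] {f : X → Y}
    {s t : Set X} (hst : s ⊆ t) {y : Y} (h : IsStableValueOn f s y) :
    IsStableValueOn f t y := by
  obtain ⟨ε, hε, H⟩ := h
  refine ⟨ε, hε, fun g hg hclose => ?_⟩
  obtain ⟨p, hp⟩ := H (fun q => g (Set.inclusion hst q))
    (hg.comp (continuous_inclusion hst)) (fun q => hclose (Set.inclusion hst q))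
  exact ⟨Set.inclusion hst p, hp⟩

lemma isStableValue_of_on_univ {X Y : Type*} [TopologicalSpace X] [MetricSpace Y]
    {f : X → Y} {y : Y} (h : IsStableValueOn f Set.univ y) : IsStableValue f y := by
  obtain ⟨ε, hε, H⟩ := h
  refine ⟨ε, hε, fun g hg hc => ?_⟩
  obtain ⟨p, hp⟩ := H (fun q => g q) (hg.comp continuous_subtype_val) (fun q => hc q)
  exact ⟨p, hp⟩

lemma glue_perturbation {X : Type*} [MetricSpace X] {E : Type*} [NormedAddCommGroup E]
    [NormedSpace ℝ E] {f : X → E} (hf : Continuous f) (y : E) {δ : ℝ} (hδ : 0 < δ)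
    {m : ℕ} (V : Fin m → Set X) (hVo : ∀ i, IsOpen (V i))
    (hVd : ∀ i j, i ≠ j → Disjoint (V i) (V j))
    (hcov : f ⁻¹' Metric.closedBall y δ ⊆ ⋃ i, V i)
    (g : ∀ i, (V i) → E) (hg : ∀ i, Continuous (g i))
    {ε : ℝ} (hε0 : 0 < ε) (hgd : ∀ i (x : V i), dist (f x) (g i x) < ε) :
    ∃ G : X → E, Continuous G ∧ (∀ x, dist (f x) (G x) < ε) ∧
      ∀ x, dist (f x) y < δ / 2 → ∃ (i : Fin m) (h : x ∈ V i), G x = g i ⟨x, h⟩ := by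
  set φ : X → ℝ := fun x => min 1 (max 0 (2 - 2 * dist (f x) y / δ)) with hφdef
  have hφcont : Continuous φ := by
    apply continuous_const.min
    apply continuous_const.max
    have : Continuous fun x => dist (f x) y := hf.dist continuous_const
    continuity
  have hφ0 : ∀ x, 0 ≤ φ x := fun x => le_min zero_le_one (le_max_left _ _)
  have hφ1 : ∀ x, φ x ≤ 1 := fun x => min_le_left _ _
  have hφeq0 : ∀ x, δ ≤ dist (f x) y → φ x = 0 := by
    intro x hx
    have h1 : 2 - 2 * dist (f x) y / δ ≤ 0 := by
      rw [sub_nonpos, le_div_iff₀ hδ]; nlinarith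
    simp only [hφdef]
    rw [max_eq_left h1, min_eq_right zero_le_one]
  have hφeq1 : ∀ x, dist (f x) y < δ / 2 → φ x = 1 := by
    intro x hx
    have h1 : 1 ≤ 2 - 2 * dist (f x) y / δ := by
      have : 2 * dist (f x) y / δ ≤ 1 := by
        rw [div_le_one hδ]; linarith
      linarith
    simp only [hφdef]
    rw [max_eq_right (le_trans zero_le_one h1), min_eq_left h1]
  set ee : Fin m → X → E :=
    fun i x => if h : x ∈ V i then φ x • (g i ⟨x, h⟩ - f x) else 0 with heedef
  have hee0 : ∀ i x, φ x = 0 → ee i x = 0 := by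
    intro i x h
    by_cases hx : x ∈ V i <;> simp [heedef, hx, h]
  have heecont : ∀ i, Continuous (ee i) := by
    intro i
    rw [continuous_iff_continuousAt]
    intro x
    by_cases hx : x ∈ V i
    · have hco : ContinuousOn (ee i) (V i) := by
        rw [continuousOn_iff_continuous_restrict]
        have hre : (V i).restrict (ee i) = fun p : V i => φ p • (g i p - f p) := by
          funext p
          simp [heedef, Set.restrict, p.2]
        show Continuous ((V i).restrict (ee i))
        rw [hre]
        exact (hφcont.comp continuous_subtype_val).smul
          ((hg i).sub (hf.comp continuous_subtype_val))
      exact hco.continuousAt ((hVo i).mem_nhds hx)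
    · have hev : ee i =ᶠ[nhds x] (fun _ => 0) := by
        by_cases hU : x ∈ ⋃ j, V j
        · obtain ⟨j, hj⟩ := mem_iUnion.1 hU
          have hne : j ≠ i := by rintro rfl; exact hx hj
          filter_upwards [(hVo j).mem_nhds hj] with z hz
          have hzi : z ∉ V i := fun h => (hVd j i hne).le_bot ⟨hz, h⟩
          simp [heedef, hzi]
        · have hdx : δ < dist (f x) y := by
            by_contra hle
            push_neg at hle
            exact hU (hcov (by simpa [Metric.mem_closedBall] using hle))
          have hopen : IsOpen {z : X | δ < dist (f z) y} :=
            isOpen_lt continuous_const (hf.dist continuous_const)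
          filter_upwards [hopen.mem_nhds hdx] with z hz
          exact hee0 i z (hφeq0 z hz.le)
      exact (continuousAt_congr hev).mpr continuousAt_const
  have hsum_mem : ∀ (x : X) (i : Fin m) (h : x ∈ V i),
      (∑ j, ee j x) = φ x • (g i ⟨x, h⟩ - f x) := by
    intro x i h
    rw [Finset.sum_eq_single i]
    · simp [heedef, h]
    · intro j _ hj
      have hxj : x ∉ V j := fun hxj => (hVd j i hj).le_bot ⟨hxj, h⟩
      simp [heedef, hxj]
    · intro habs; exact absurd (Finset.mem_univ i) habs
  have hsum_not : ∀ x : X, x ∉ (⋃ j, V j) → (∑ j, ee j x) = 0 := by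
    intro x hx
    apply Finset.sum_eq_zero
    intro j _
    have : x ∉ V j := fun h => hx (mem_iUnion.2 ⟨j, h⟩)
    simp [heedef, this]
  refine ⟨fun x => f x + ∑ j, ee j x,
    hf.add (continuous_finset_sum _ fun j _ => heecont j), ?_, ?_⟩
  · intro x
    by_cases hU : x ∈ ⋃ j, V j
    · obtain ⟨i, hi⟩ := mem_iUnion.1 hU
      rw [dist_self_add_right, hsum_mem x i hi, norm_smul]
      have h1 : ‖g i ⟨x, hi⟩ - f x‖ < ε := by
        have := hgd i ⟨x, hi⟩
        rwa [dist_eq_norm, norm_sub_rev] at this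
      calc ‖φ x‖ * ‖g i ⟨x, hi⟩ - f x‖ ≤ 1 * ‖g i ⟨x, hi⟩ - f x‖ := by
            apply mul_le_mul_of_nonneg_right _ (norm_nonneg _)
            rw [Real.norm_eq_abs, abs_le]
            exact ⟨le_trans (by norm_num) (hφ0 x), hφ1 x⟩
        _ = ‖g i ⟨x, hi⟩ - f x‖ := one_mul _
        _ < ε := h1
    · rw [dist_self_add_right, hsum_not x hU]
      simpa using hε0
  · intro x hx
    have hxU : x ∈ ⋃ j, V j := hcov (by
      simp only [mem_preimage, Metric.mem_closedBall]
      linarith [hx, hδ])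
    obtain ⟨i, hi⟩ := mem_iUnion.1 hxU
    refine ⟨i, hi, ?_⟩
    show f x + ∑ j, ee j x = g i ⟨x, hi⟩
    rw [hsum_mem x i hi, hφeq1 x hx, one_smul]
    abel

/-- **Bonk–Kleiner, Lemma 3.6.** A value `y` of a continuous map `f : X → ℝⁿ` is
stable iff it is a stable value of the restriction of `f` to `f⁻¹(W)` for every
neighborhood `W` of `y`; and if `X` is compact and `f⁻¹(y)` is totally disconnected,
then `y` is a stable value iff the fiber `f⁻¹(y)` contains a stable point. -/
theorem stable_value_localization {X : Type*} [MetricSpace X] (n : ℕ)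
    (f : X → EuclideanSpace ℝ (Fin n)) (hf : Continuous f)
    (y : EuclideanSpace ℝ (Fin n)) :
    (IsStableValue f y ↔ ∀ W ∈ nhds y, IsStableValueOn f (f ⁻¹' W) y) ∧
    (CompactSpace X → IsTotallyDisconnected (f ⁻¹' {y}) →
      (IsStableValue f y ↔ ∃ x, f x = y ∧ IsStablePoint f x)) := by
  constructor
  · constructor
    · -- stable ⇒ stable on preimages of neighborhoods
      rintro ⟨ε, hε, hstab⟩ W hW
      obtain ⟨r, hr, hball⟩ := Metric.mem_nhds_iff.1 hW
      have hsub : f ⁻¹' Metric.ball y r ⊆ f ⁻¹' W := preimage_mono hball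
      refine ⟨min ε (r / 4), lt_min hε (by linarith), fun g hg hc => ?_⟩
      set V : Fin 1 → Set X := fun _ => f ⁻¹' Metric.ball y r with hV
      have hVo : ∀ i, IsOpen (V i) := fun i => Metric.isOpen_ball.preimage hf
      have hVd : ∀ i j : Fin 1, i ≠ j → Disjoint (V i) (V j) := by
        intro i j hij; exact absurd (Subsingleton.elim i j) hij
      have hcov : f ⁻¹' Metric.closedBall y (r / 2) ⊆ ⋃ i, V i := by
        intro x hx
        refine mem_iUnion.2 ⟨0, ?_⟩
        simp only [hV, mem_preimage, Metric.mem_ball]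
        have : dist (f x) y ≤ r / 2 := hx
        linarith
      set g' : ∀ i : Fin 1, (V i) → EuclideanSpace ℝ (Fin n) :=
        fun i p => g ⟨p.1, hsub p.2⟩ with hg'
      have hg'c : ∀ i, Continuous (g' i) := fun i =>
        hg.comp (continuous_inclusion hsub)
      have hg'd : ∀ i (p : (V i)), dist (f p) (g' i p) < min ε (r / 4) :=
        fun i p => hc ⟨p.1, hsub p.2⟩
      obtain ⟨G, hGc, hGd, hGloc⟩ := glue_perturbation hf y (by linarith : (0:ℝ) < r / 2)
        V hVo hVd hcov g' hg'c (lt_min hε (by linarith)) hg'd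
      obtain ⟨x, hGx⟩ := hstab G hGc fun x => (hGd x).trans_le (min_le_left _ _)
      have hdx : dist (f x) y < r / 2 / 2 := by
        rw [← hGx]
        calc dist (f x) (G x) < min ε (r / 4) := hGd x
          _ ≤ r / 4 := min_le_right _ _
          _ ≤ r / 2 / 2 := by linarith
      obtain ⟨i, hmem, heq⟩ := hGloc x hdx
      exact ⟨⟨x, hsub hmem⟩, by rw [show g ⟨x, hsub hmem⟩ = g' i ⟨x, hmem⟩ from rfl, ← heq, hGx]⟩
    · intro h
      have h' := h Set.univ univ_mem
      rw [Set.preimage_univ] at h'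
      exact isStableValue_of_on_univ h'
  · intro hcs htd
    constructor
    · -- hard direction
      intro hst
      by_contra hno
      push_neg at hno
      obtain ⟨ε, hε, hstab⟩ := hst
      have hK : IsCompact (f ⁻¹' {y}) := (isClosed_singleton.preimage hf).isCompact
      have hKne : (f ⁻¹' {y}).Nonempty := by
        obtain ⟨x, hx⟩ := hstab f hf (fun x => by simpa using hε)
        exact ⟨x, by simpa using hx⟩
      haveI : CompactSpace (f ⁻¹' {y}) := isCompact_iff_compactSpace.1 hK
      haveI : TotallyDisconnectedSpace (f ⁻¹' {y}) :=
        totallyDisconnectedSpace_subtype_iff.2 htd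
      have hpt : ∀ x : (f ⁻¹' {y}), ∃ U : Set X,
          IsOpen U ∧ (x : X) ∈ U ∧ ¬ IsStableValueOn f U y := by
        intro x
        have hfx : f (x : X) = y := x.2
        have hns := hno (x : X) hfx
        rw [IsStablePoint] at hns
        push_neg at hns
        obtain ⟨U, hU, hnst⟩ := hns
        obtain ⟨O, hOU, hOopen, hxO⟩ := _root_.mem_nhds_iff.1 hU
        rw [hfx] at hnst
        exact ⟨O, hOopen, hxO, fun hs => hnst (stableOn_mono hOU hs)⟩
      choose U hUopen hxU hUnst using hpt
      have hclopen : ∀ x : (f ⁻¹' {y}), ∃ C : Set (f ⁻¹' {y}),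
          IsClopen C ∧ x ∈ C ∧ C ⊆ Subtype.val ⁻¹' (U x) :=
        fun x => compact_exists_isClopen_in_isOpen
          ((hUopen x).preimage continuous_subtype_val) (hxU x)
      choose C hCclopen hxC hCsub using hclopen
      obtain ⟨t, ht⟩ := isCompact_univ.elim_finite_subcover C
        (fun x => (hCclopen x).2) (fun z _ => mem_iUnion.2 ⟨z, hxC z⟩)
      have htne : t.Nonempty := by
        obtain ⟨z, hz⟩ := hKne
        obtain ⟨x, hx⟩ := mem_iUnion.1 (ht (mem_univ (⟨z, hz⟩ : (f ⁻¹' {y}))))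
        obtain ⟨hxt, _⟩ := mem_iUnion.1 hx
        exact ⟨x, hxt⟩
      set m := t.card with hm
      haveI : Nonempty (Fin m) := ⟨⟨0, Finset.card_pos.2 htne⟩⟩
      set e : {x // x ∈ t} ≃ Fin m := Fintype.equivFinOfCardEq (Fintype.card_coe t) with he
      set Cm : Fin m → Set (f ⁻¹' {y}) := fun i => C (e.symm i).1 with hCm
      set Um : Fin m → Set X := fun i => U (e.symm i).1 with hUm
      -- disjointify
      set D : Fin m → Set (f ⁻¹' {y}) :=
        fun i => Cm i \ ⋃ j ∈ Finset.univ.filter (fun j => j < i), Cm j with hD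
      have hDsub : ∀ i, D i ⊆ Cm i := fun i => diff_subset
      have hDclopen : ∀ i, IsClopen (D i) := fun i =>
        (hCclopen _).diff (isClopen_biUnion_finset fun j _ => hCclopen _)
      have hDmem : ∀ (z : (f ⁻¹' {y})) i, z ∈ D i ↔ z ∈ Cm i ∧ ∀ j < i, z ∉ Cm j := by
        intro z i
        simp [hD]
      have hDdisj : ∀ i j, i ≠ j → Disjoint (D i) (D j) := by
        intro i j hij
        rcases hij.lt_or_gt with hlt | hlt
        · rw [Set.disjoint_left]
          intro z hzi hzj
          exact ((hDmem z j).1 hzj).2 i hlt (hDsub i hzi)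
        · rw [Set.disjoint_left]
          intro z hzi hzj
          exact ((hDmem z i).1 hzi).2 j hlt (hDsub j hzj)
      have hDcover : ∀ z : (f ⁻¹' {y}), ∃ i, z ∈ D i := by
        intro z
        have hzC : ∃ i, z ∈ Cm i := by
          obtain ⟨x, hx⟩ := mem_iUnion.1 (ht (mem_univ z))
          obtain ⟨hxt, hzx⟩ := mem_iUnion.1 hx
          refine ⟨e ⟨x, hxt⟩, ?_⟩
          simp only [hCm, he, Equiv.symm_apply_apply]
          exact hzx
        set S := Finset.univ.filter (fun i => z ∈ Cm i) with hS
        have hSne : S.Nonempty := by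
          obtain ⟨i, hi⟩ := hzC
          exact ⟨i, by simp [hS, hi]⟩
        refine ⟨S.min' hSne, (hDmem z _).2 ⟨?_, ?_⟩⟩
        · have := S.min'_mem hSne
          simpa [hS] using this
        · intro j hj hzj
          exact absurd (S.min'_le j (by simp [hS, hzj])) (not_le.2 hj)
      -- move down to X
      set KK : Fin m → Set X := fun i => Subtype.val '' D i with hKK
      have hKKcomp : ∀ i, IsCompact (KK i) := fun i =>
        ((hDclopen i).1.isCompact).image continuous_subtype_val
      have hKKsub : ∀ i, KK i ⊆ Um i := by
        rintro i z ⟨p, hp, rfl⟩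
        exact hCsub _ (hDsub i hp)
      have hKKdisj : ∀ i j, i ≠ j → Disjoint (KK i) (KK j) := fun i j hij =>
        Set.disjoint_image_of_injective Subtype.val_injective (hDdisj i j hij)
      have hKcover : f ⁻¹' {y} ⊆ ⋃ i, KK i := by
        intro z hz
        obtain ⟨i, hi⟩ := hDcover ⟨z, hz⟩
        exact mem_iUnion.2 ⟨i, ⟨⟨z, hz⟩, hi, rfl⟩⟩
      -- choose thickening radii
      have hsep : ∀ i j, ∃ r, 0 < r ∧ (i ≠ j →
          Disjoint (thickening r (KK i)) (thickening r (KK j))) := by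
        intro i j
        by_cases hij : i = j
        · exact ⟨1, one_pos, fun h => absurd hij h⟩
        · obtain ⟨r, hr, hd⟩ := Disjoint.exists_thickenings (hKKdisj i j hij)
            (hKKcomp i) (hKKcomp j).isClosed
          exact ⟨r, hr, fun _ => hd⟩
      choose ρ hρpos hρdisj using hsep
      have hsub' : ∀ i, ∃ r, 0 < r ∧ thickening r (KK i) ⊆ Um i := fun i =>
        (hKKcomp i).exists_thickening_subset_open (hUopen _) (hKKsub i)
      choose σ hσpos hσsub using hsub'
      set r : ℝ := Finset.univ.inf' Finset.univ_nonempty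
        (fun i => min (σ i) (Finset.univ.inf' Finset.univ_nonempty (ρ i))) with hrdef
      have hr0 : 0 < r := by
        rw [hrdef, Finset.lt_inf'_iff]
        intro i _
        exact lt_min (hσpos i) ((Finset.lt_inf'_iff _).2 fun j _ => hρpos i j)
      have hrσ : ∀ i, r ≤ σ i := fun i =>
        (Finset.inf'_le _ (Finset.mem_univ i)).trans (min_le_left _ _)
      have hrρ : ∀ i j, r ≤ ρ i j := fun i j =>
        (Finset.inf'_le _ (Finset.mem_univ i)).trans
          ((min_le_right _ _).trans (Finset.inf'_le _ (Finset.mem_univ j)))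
      set V : Fin m → Set X := fun i => thickening r (KK i) with hV
      have hVo : ∀ i, IsOpen (V i) := fun i => isOpen_thickening
      have hVd : ∀ i j, i ≠ j → Disjoint (V i) (V j) := fun i j hij =>
        (hρdisj i j hij).mono (thickening_mono (hrρ i j) _) (thickening_mono (hrρ i j) _)
      have hVUm : ∀ i, V i ⊆ Um i := fun i =>
        (thickening_mono (hrσ i) _).trans (hσsub i)
      have hVnst : ∀ i, ¬ IsStableValueOn f (V i) y := fun i hs =>
        hUnst _ (stableOn_mono (hVUm i) hs)
      have hKV : f ⁻¹' {y} ⊆ ⋃ i, V i :=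
        hKcover.trans (iUnion_mono fun i => self_subset_thickening hr0 _)
      -- find δ
      have hδex : ∃ δ > (0:ℝ), f ⁻¹' Metric.closedBall y δ ⊆ ⋃ i, V i := by
        rcases eq_empty_or_nonempty ((⋃ i, V i)ᶜ) with hemp | hne
        · refine ⟨1, one_pos, fun x _ => ?_⟩
          by_contra h
          exact eq_empty_iff_forall_notMem.1 hemp x h
        · have hcOc : IsCompact ((⋃ i, V i)ᶜ) :=
            ((isOpen_iUnion hVo).isClosed_compl).isCompact
          obtain ⟨x₀, hx₀, hmin⟩ := hcOc.exists_isMinOn hne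
            ((hf.dist continuous_const).continuousOn)
          have hx₀pos : 0 < dist (f x₀) y := by
            rcases (dist_nonneg : (0:ℝ) ≤ dist (f x₀) y).lt_or_eq with h | h
            · exact h
            · exfalso
              have : f x₀ = y := by rwa [eq_comm, dist_eq_zero] at h
              exact hx₀ (hKV (by simpa using this))
          refine ⟨dist (f x₀) y / 2, half_pos hx₀pos, fun x hx => ?_⟩
          by_contra hxn
          have h1 : dist (f x₀) y ≤ dist (f x) y := hmin hxn
          have h2 : dist (f x) y ≤ dist (f x₀) y / 2 := hx
          linarith
      obtain ⟨δ, hδ0, hδcov⟩ := hδex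
      -- perturbations avoiding y on each V i
      have hε'' : (0:ℝ) < min ε (δ / 2) := lt_min hε (by linarith)
      have hgex : ∀ i, ∃ g : (V i) → EuclideanSpace ℝ (Fin n), Continuous g ∧
          (∀ p : (V i), dist (f p) (g p) < min ε (δ / 2)) ∧ y ∉ range g := by
        intro i
        have h := hVnst i
        rw [IsStableValueOn, IsStableValue] at h
        push_neg at h
        exact h _ hε''
      choose g hgc hgd hgy using hgex
      obtain ⟨G, hGc, hGd, hGloc⟩ := glue_perturbation hf y hδ0 V hVo hVd hδcov
        g hgc hε'' hgd
      obtain ⟨x, hGx⟩ := hstab G hGc fun x => (hGd x).trans_le (min_le_left _ _)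
      have hdx : dist (f x) y < δ / 2 := by
        rw [← hGx]
        exact (hGd x).trans_le (min_le_right _ _)
      obtain ⟨i, hmem, heq⟩ := hGloc x hdx
      exact hgy i ⟨⟨x, hmem⟩, by rw [← heq, hGx]⟩
    · rintro ⟨x, hfx, hx⟩
      have h := hx Set.univ univ_mem
      rw [hfx] at h
      exact isStableValue_of_on_univ h
end
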